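/- Let F_3 ⊂ P^2(C) be the nine points [1, −ω^a, 0], [1, 0, −ω^a], [0, 1, −ω^a] for a ∈ {0,1,2}, where ω is a primitive cube root of unity. Then every line containing at least two points of F_3 contains exactly three points of F_3; in particular F_3 has exactly twelve 3-rich lines, no simple lines, and no k-rich lines with k ≥ 4. -/

import Mathlib

open MvPolynomial

noncomputable section

abbrev P2 := Projectivization ℂ (Fin 3 → ℂ)

/-- A projective line in `P2`, given as the zero set of a nonzero linear form. -/
def IsLine (S : Set P2) : Prop :=
  ∃ f : (Fin 3 → ℂ) →ₗ[ℂ] ℂ, f ≠ 0 ∧ S = {p : P2 | f p.rep = 0}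

/-- Three points of `P2` are collinear if some line contains all of them. -/
def Collinear3 (p q r : P2) : Prop :=
  ∃ S : Set P2, IsLine S ∧ p ∈ S ∧ q ∈ S ∧ r ∈ S

/-- A point of `P2` from homogeneous coordinates. -/
def pt (v : Fin 3 → ℂ) (h : v ≠ 0) : P2 := Projectivization.mk ℂ v h

/-- Two sets of points of `P2` are projectively equivalent if a linear automorphism
of `ℂ³` carries one onto the other. -/
def ProjEquiv (A B : Set P2) : Prop :=
  ∃ g : (Fin 3 → ℂ) ≃ₗ[ℂ] (Fin 3 → ℂ),
    B = Projectivization.map (g : (Fin 3 → ℂ) →ₗ[ℂ] (Fin 3 → ℂ)) g.injective '' A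


/-- The dual Fermat configuration `F₃`: the nine points
`[1, -ω^a, 0]`, `[1, 0, -ω^a]`, `[0, 1, -ω^a]` for `a = 0, 1, 2`. -/
def F3 (ω : ℂ) : Set P2 :=
  ⋃ a : Fin 3,
    ({pt ![1, -ω ^ (a : ℕ), 0] (by intro h; simpa using congrFun h 0),
      pt ![1, 0, -ω ^ (a : ℕ)] (by intro h; simpa using congrFun h 0),
      pt ![0, 1, -ω ^ (a : ℕ)] (by intro h; simpa using congrFun h 1)} : Set P2)

namespace F3Aux

/-! ### Basic infrastructure -/

theorem mem_line_iff (f : (Fin 3 → ℂ) →ₗ[ℂ] ℂ) (v : Fin 3 → ℂ) (h : v ≠ 0) :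
    pt v h ∈ {p : P2 | f p.rep = 0} ↔ f v = 0 := by
  have h1 : Projectivization.mk ℂ (pt v h).rep (Projectivization.rep_nonzero _) = pt v h :=
    Projectivization.mk_rep _
  rw [pt, Projectivization.mk_eq_mk_iff] at h1
  obtain ⟨a, ha⟩ := h1
  have key : f ((pt v h).rep) = a * f v := by
    rw [pt, ← ha]; simp [Units.smul_def]
  constructor
  · intro hm
    have h2 : f ((pt v h).rep) = 0 := hm
    rw [key] at h2
    exact (mul_eq_zero.mp h2).resolve_left a.ne_zero
  · intro hv
    show f ((pt v h).rep) = 0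
    rw [key, hv, mul_zero]

theorem apply_eq (f : (Fin 3 → ℂ) →ₗ[ℂ] ℂ) (v : Fin 3 → ℂ) :
    f v = v 0 * f (Pi.single 0 1) + v 1 * f (Pi.single 1 1) + v 2 * f (Pi.single 2 1) := by
  have hv : v = v 0 • (Pi.single 0 1 : Fin 3 → ℂ) + v 1 • (Pi.single 1 1 : Fin 3 → ℂ)
      + v 2 • (Pi.single 2 1 : Fin 3 → ℂ) := by
    funext i; fin_cases i <;> simp
  conv_lhs => rw [hv]
  simp [smul_eq_mul]

def lf (A B C : ℂ) : (Fin 3 → ℂ) →ₗ[ℂ] ℂ :=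
  A • LinearMap.proj 0 + B • LinearMap.proj 1 + C • LinearMap.proj 2

theorem lf_apply (A B C : ℂ) (v : Fin 3 → ℂ) : lf A B C v = A * v 0 + B * v 1 + C * v 2 := by
  simp [lf]

theorem lf_ne_zero {A B C : ℂ} (h : ¬(A = 0 ∧ B = 0 ∧ C = 0)) : lf A B C ≠ 0 := by
  intro hf
  have h0 := congrArg (fun g => g (Pi.single 0 1 : Fin 3 → ℂ)) hf
  have h1 := congrArg (fun g => g (Pi.single 1 1 : Fin 3 → ℂ)) hf
  have h2 := congrArg (fun g => g (Pi.single 2 1 : Fin 3 → ℂ)) hf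
  simp [lf_apply] at h0 h1 h2
  exact h ⟨h0, h1, h2⟩

theorem lf_eq (f : (Fin 3 → ℂ) →ₗ[ℂ] ℂ) :
    f = lf (f (Pi.single 0 1)) (f (Pi.single 1 1)) (f (Pi.single 2 1)) := by
  apply LinearMap.ext
  intro v
  rw [lf_apply, apply_eq f v]
  ring

theorem ker_eq_ker {f g : (Fin 3 → ℂ) →ₗ[ℂ] ℂ} (hf : f ≠ 0) (hg : g ≠ 0)
    {x y : P2} (hxy : x ≠ y)
    (hxf : f x.rep = 0) (hyf : f y.rep = 0) (hxg : g x.rep = 0) (hyg : g y.rep = 0) :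
    LinearMap.ker f = LinearMap.ker g := by
  have hind : LinearIndependent ℂ (Projectivization.rep ∘ ![x, y]) := by
    rw [← Projectivization.independent_iff]
    exact (Projectivization.independent_pair_iff_ne x y).mpr hxy
  set W : Submodule ℂ (Fin 3 → ℂ) := Submodule.span ℂ (Set.range (Projectivization.rep ∘ ![x, y]))
  have hW : Module.finrank ℂ W = 2 := by
    rw [finrank_span_eq_card hind]; simp
  have kerrank : ∀ {h : (Fin 3 → ℂ) →ₗ[ℂ] ℂ}, h ≠ 0 → Module.finrank ℂ (LinearMap.ker h) = 2 := by
    intro h hh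
    obtain ⟨v, hv⟩ := DFunLike.ne_iff.mp hh
    simp only [LinearMap.zero_apply] at hv
    have hr : LinearMap.range h = ⊤ := by
      rw [LinearMap.range_eq_top]
      intro c
      exact ⟨(c / h v) • v, by rw [map_smul, smul_eq_mul, div_mul_cancel₀ _ hv]⟩
    have := LinearMap.finrank_range_add_finrank_ker h
    rw [hr] at this
    simp only [finrank_top] at this
    have h3 : Module.finrank ℂ (Fin 3 → ℂ) = 3 := by simp
    have h1 : Module.finrank ℂ ℂ = 1 := Module.finrank_self ℂ
    omega
  have hsub : ∀ {h : (Fin 3 → ℂ) →ₗ[ℂ] ℂ}, h x.rep = 0 → h y.rep = 0 →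
      W ≤ LinearMap.ker h := by
    intro h hx hy
    rw [Submodule.span_le]
    rintro z ⟨i, rfl⟩
    fin_cases i <;> simpa [LinearMap.mem_ker]
  have hWf : W ≤ LinearMap.ker f ⊓ LinearMap.ker g :=
    le_inf (hsub hxf hyf) (hsub hxg hyg)
  have h2 : 2 ≤ Module.finrank ℂ (LinearMap.ker f ⊓ LinearMap.ker g : Submodule ℂ (Fin 3 → ℂ)) := by
    rw [← hW]; exact Submodule.finrank_mono hWf
  have e1 : LinearMap.ker f ⊓ LinearMap.ker g = LinearMap.ker f :=
    Submodule.eq_of_le_of_finrank_le inf_le_left (by rw [kerrank hf]; exact h2)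
  have e2 : LinearMap.ker f ⊓ LinearMap.ker g = LinearMap.ker g :=
    Submodule.eq_of_le_of_finrank_le inf_le_right (by rw [kerrank hg]; exact h2)
  rw [← e1, e2]

theorem line_unique {f g : (Fin 3 → ℂ) →ₗ[ℂ] ℂ} (hf : f ≠ 0) (hg : g ≠ 0)
    {x y : P2} (hxy : x ≠ y)
    (hxf : f x.rep = 0) (hyf : f y.rep = 0) (hxg : g x.rep = 0) (hyg : g y.rep = 0) :
    {p : P2 | f p.rep = 0} = {p : P2 | g p.rep = 0} := by
  have hker := ker_eq_ker hf hg hxy hxf hyf hxg hyg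
  ext p
  simp only [Set.mem_setOf_eq, ← LinearMap.mem_ker, hker]

/-! ### The nine points -/

def Pp (ω : ℂ) (a : Fin 3) : P2 :=
  pt ![1, -ω ^ (a : ℕ), 0] (by intro h; simpa using congrFun h 0)
def Qq (ω : ℂ) (a : Fin 3) : P2 :=
  pt ![1, 0, -ω ^ (a : ℕ)] (by intro h; simpa using congrFun h 0)
def Rr (ω : ℂ) (a : Fin 3) : P2 :=
  pt ![0, 1, -ω ^ (a : ℕ)] (by intro h; simpa using congrFun h 1)

theorem mem_F3_iff (ω : ℂ) (x : P2) :
    x ∈ F3 ω ↔ (∃ a, x = Pp ω a) ∨ (∃ a, x = Qq ω a) ∨ (∃ a, x = Rr ω a) := by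
  simp only [F3, Set.mem_iUnion, Set.mem_insert_iff, Set.mem_singleton_iff, Pp, Qq, Rr]
  constructor
  · rintro ⟨a, h | h | h⟩
    · exact Or.inl ⟨a, h⟩
    · exact Or.inr (Or.inl ⟨a, h⟩)
    · exact Or.inr (Or.inr ⟨a, h⟩)
  · rintro (⟨a, h⟩ | ⟨a, h⟩ | ⟨a, h⟩)
    · exact ⟨a, Or.inl h⟩
    · exact ⟨a, Or.inr (Or.inl h)⟩
    · exact ⟨a, Or.inr (Or.inr h)⟩

theorem memP (ω A B C : ℂ) (a : Fin 3) :
    Pp ω a ∈ {p : P2 | lf A B C p.rep = 0} ↔ A = ω ^ (a : ℕ) * B := by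
  rw [Pp, mem_line_iff, lf_apply]
  simp [sub_eq_zero]
  constructor <;> intro h <;> linear_combination h

theorem memQ (ω A B C : ℂ) (a : Fin 3) :
    Qq ω a ∈ {p : P2 | lf A B C p.rep = 0} ↔ A = ω ^ (a : ℕ) * C := by
  rw [Qq, mem_line_iff, lf_apply]
  simp [sub_eq_zero]
  constructor <;> intro h <;> linear_combination h

theorem memR (ω A B C : ℂ) (a : Fin 3) :
    Rr ω a ∈ {p : P2 | lf A B C p.rep = 0} ↔ B = ω ^ (a : ℕ) * C := by
  rw [Rr, mem_line_iff, lf_apply]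
  simp [sub_eq_zero]
  constructor <;> intro h <;> linear_combination h

def sset (ω A B C : ℂ) : Set P2 := F3 ω ∩ {p : P2 | lf A B C p.rep = 0}

theorem mem_sset (ω A B C : ℂ) (x : P2) :
    x ∈ sset ω A B C ↔
      (∃ a : Fin 3, x = Pp ω a ∧ A = ω ^ (a : ℕ) * B) ∨
      (∃ a : Fin 3, x = Qq ω a ∧ A = ω ^ (a : ℕ) * C) ∨
      (∃ a : Fin 3, x = Rr ω a ∧ B = ω ^ (a : ℕ) * C) := by
  simp only [sset, Set.mem_inter_iff, mem_F3_iff]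
  constructor
  · rintro ⟨⟨a, rfl⟩ | ⟨a, rfl⟩ | ⟨a, rfl⟩, hS⟩
    · exact Or.inl ⟨a, rfl, (memP ω A B C a).mp hS⟩
    · exact Or.inr (Or.inl ⟨a, rfl, (memQ ω A B C a).mp hS⟩)
    · exact Or.inr (Or.inr ⟨a, rfl, (memR ω A B C a).mp hS⟩)
  · rintro (⟨a, rfl, h⟩ | ⟨a, rfl, h⟩ | ⟨a, rfl, h⟩)
    · exact ⟨Or.inl ⟨a, rfl⟩, (memP ω A B C a).mpr h⟩
    · exact ⟨Or.inr (Or.inl ⟨a, rfl⟩), (memQ ω A B C a).mpr h⟩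
    · exact ⟨Or.inr (Or.inr ⟨a, rfl⟩), (memR ω A B C a).mpr h⟩

/-! ### Roots of unity arithmetic and distinctness -/

section Root

variable {ω : ℂ} (hω : IsPrimitiveRoot ω 3)
include hω

theorem omega_ne : ω ≠ 0 := hω.ne_zero (by norm_num)

theorem pow_ne (a : Fin 3) : ω ^ (a : ℕ) ≠ 0 := pow_ne_zero _ (omega_ne hω)

theorem pow_fin_inj {a b : Fin 3} (h : ω ^ (a : ℕ) = ω ^ (b : ℕ)) : a = b :=
  Fin.ext (hω.pow_inj a.isLt b.isLt h)

theorem pow_mod3 (n : ℕ) : ω ^ n = ω ^ (n % 3) := by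
  conv_lhs => rw [← Nat.mod_add_div n 3, pow_add, pow_mul, hω.pow_eq_one]
  simp

theorem pow_fin_add (x y : Fin 3) :
    ω ^ ((x + y : Fin 3) : ℕ) = ω ^ (x : ℕ) * ω ^ (y : ℕ) := by
  rw [Fin.add_def]
  show ω ^ ((x.val + y.val) % 3) = _
  rw [← pow_mod3 hω, pow_add]

theorem pow_fin_sub (x y : Fin 3) :
    ω ^ ((x - y : Fin 3) : ℕ) * ω ^ (y : ℕ) = ω ^ (x : ℕ) := by
  rw [← pow_fin_add hω, sub_add_cancel]

theorem Pp_inj {a b : Fin 3} (h : Pp ω a = Pp ω b) : a = b := by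
  rw [Pp, Pp, pt, pt, Projectivization.mk_eq_mk_iff] at h
  obtain ⟨u, hu⟩ := h
  have h0 := congrFun hu 0
  have h1 := congrFun hu 1
  simp [Units.smul_def] at h0 h1
  rw [h0] at h1
  simp at h1
  exact (pow_fin_inj hω h1).symm

theorem Qq_inj {a b : Fin 3} (h : Qq ω a = Qq ω b) : a = b := by
  rw [Qq, Qq, pt, pt, Projectivization.mk_eq_mk_iff] at h
  obtain ⟨u, hu⟩ := h
  have h0 := congrFun hu 0
  have h2 := congrFun hu 2
  simp [Units.smul_def] at h0 h2
  rw [h0] at h2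
  simp at h2
  exact (pow_fin_inj hω h2).symm

theorem Rr_inj {a b : Fin 3} (h : Rr ω a = Rr ω b) : a = b := by
  rw [Rr, Rr, pt, pt, Projectivization.mk_eq_mk_iff] at h
  obtain ⟨u, hu⟩ := h
  have h1 := congrFun hu 1
  have h2 := congrFun hu 2
  simp [Units.smul_def] at h1 h2
  rw [h1] at h2
  simp at h2
  exact (pow_fin_inj hω h2).symm

theorem Pp_ne_Qq (a b : Fin 3) : Pp ω a ≠ Qq ω b := by
  intro h
  rw [Pp, Qq, pt, pt, Projectivization.mk_eq_mk_iff] at h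
  obtain ⟨u, hu⟩ := h
  have h1 := congrFun hu 1
  simp [Units.smul_def] at h1
  exact omega_ne hω h1.1

omit hω in
theorem Pp_ne_Rr (a b : Fin 3) : Pp ω a ≠ Rr ω b := by
  intro h
  rw [Pp, Rr, pt, pt, Projectivization.mk_eq_mk_iff] at h
  obtain ⟨u, hu⟩ := h
  have h0 := congrFun hu 0
  simp [Units.smul_def] at h0

omit hω in
theorem Qq_ne_Rr (a b : Fin 3) : Qq ω a ≠ Rr ω b := by
  intro h
  rw [Qq, Rr, pt, pt, Projectivization.mk_eq_mk_iff] at h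
  obtain ⟨u, hu⟩ := h
  have h0 := congrFun hu 0
  simp [Units.smul_def] at h0

/-! ### Classification of intersections with lines -/

theorem sset_T1 {A B C : ℂ} (hA : A = 0) (hB : B = 0) (hC : C ≠ 0) :
    sset ω A B C = {Pp ω 0, Pp ω 1, Pp ω 2} := by
  ext x
  rw [mem_sset]
  constructor
  · rintro (⟨a, rfl, h⟩ | ⟨a, rfl, h⟩ | ⟨a, rfl, h⟩)
    · fin_cases a <;> simp
    · exact absurd (hA ▸ h).symm (mul_ne_zero (pow_ne hω a) hC)
    · exact absurd (hB ▸ h).symm (mul_ne_zero (pow_ne hω a) hC)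
  · rintro (rfl | rfl | rfl) <;> exact Or.inl ⟨_, rfl, by rw [hA, hB, mul_zero]⟩

theorem sset_T2 {A B C : ℂ} (hA : A = 0) (hC : C = 0) (hB : B ≠ 0) :
    sset ω A B C = {Qq ω 0, Qq ω 1, Qq ω 2} := by
  ext x
  rw [mem_sset]
  constructor
  · rintro (⟨a, rfl, h⟩ | ⟨a, rfl, h⟩ | ⟨a, rfl, h⟩)
    · exact absurd (hA ▸ h).symm (mul_ne_zero (pow_ne hω a) hB)
    · fin_cases a <;> simp
    · exact absurd (hC ▸ h) (by simpa using hB)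
  · rintro (rfl | rfl | rfl) <;> exact Or.inr (Or.inl ⟨_, rfl, by rw [hA, hC, mul_zero]⟩)

omit hω in
theorem sset_T3 {A B C : ℂ} (hB : B = 0) (hC : C = 0) (hA : A ≠ 0) :
    sset ω A B C = {Rr ω 0, Rr ω 1, Rr ω 2} := by
  ext x
  rw [mem_sset]
  constructor
  · rintro (⟨a, rfl, h⟩ | ⟨a, rfl, h⟩ | ⟨a, rfl, h⟩)
    · exact absurd (hB ▸ h) (by simpa using hA)
    · exact absurd (hC ▸ h) (by simpa using hA)
    · fin_cases a <;> simp
  · rintro (rfl | rfl | rfl) <;> exact Or.inr (Or.inr ⟨_, rfl, by rw [hB, hC, mul_zero]⟩)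

theorem sset_tri {A B C : ℂ} {a b : Fin 3} (hB : B ≠ 0) (hC : C ≠ 0)
    (ha : A = ω ^ (a : ℕ) * B) (hb : A = ω ^ (b : ℕ) * C) :
    sset ω A B C = {Pp ω a, Qq ω b, Rr ω (b - a)} := by
  have hr : B = ω ^ ((b - a : Fin 3) : ℕ) * C := by
    have h1 : ω ^ (a : ℕ) * B = ω ^ ((b - a : Fin 3) : ℕ) * ω ^ (a : ℕ) * C := by
      rw [pow_fin_sub hω b a, ← ha, hb]
    have h2 : ω ^ (a : ℕ) * B = ω ^ (a : ℕ) * (ω ^ ((b - a : Fin 3) : ℕ) * C) := by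
      linear_combination h1
    exact mul_left_cancel₀ (pow_ne hω a) h2
  ext x
  rw [mem_sset]
  constructor
  · rintro (⟨a', rfl, h⟩ | ⟨a', rfl, h⟩ | ⟨a', rfl, h⟩)
    · have : a' = a := pow_fin_inj hω (mul_right_cancel₀ hB (h.symm.trans ha))
      subst this; simp
    · have : a' = b := pow_fin_inj hω (mul_right_cancel₀ hC (h.symm.trans hb))
      subst this; simp
    · have : a' = b - a := pow_fin_inj hω (mul_right_cancel₀ hC (h.symm.trans hr))
      subst this; simp
  · rintro (rfl | rfl | rfl)
    · exact Or.inl ⟨a, rfl, ha⟩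
    · exact Or.inr (Or.inl ⟨b, rfl, hb⟩)
    · exact Or.inr (Or.inr ⟨b - a, rfl, hr⟩)

theorem sset_singleP {A B C : ℂ} {a : Fin 3} (hB : B ≠ 0) (ha : A = ω ^ (a : ℕ) * B)
    (hQ : ¬∃ b : Fin 3, A = ω ^ (b : ℕ) * C) (hR : ¬∃ c : Fin 3, B = ω ^ (c : ℕ) * C) :
    sset ω A B C = {Pp ω a} := by
  ext x
  rw [mem_sset]
  constructor
  · rintro (⟨a', rfl, h⟩ | ⟨a', rfl, h⟩ | ⟨a', rfl, h⟩)
    · have : a' = a := pow_fin_inj hω (mul_right_cancel₀ hB (h.symm.trans ha))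
      subst this; rfl
    · exact absurd ⟨a', h⟩ hQ
    · exact absurd ⟨a', h⟩ hR
  · rintro rfl; exact Or.inl ⟨a, rfl, ha⟩

theorem sset_singleQ {A B C : ℂ} {b : Fin 3} (hC : C ≠ 0) (hb : A = ω ^ (b : ℕ) * C)
    (hP : ¬∃ a : Fin 3, A = ω ^ (a : ℕ) * B) (hR : ¬∃ c : Fin 3, B = ω ^ (c : ℕ) * C) :
    sset ω A B C = {Qq ω b} := by
  ext x
  rw [mem_sset]
  constructor
  · rintro (⟨a', rfl, h⟩ | ⟨a', rfl, h⟩ | ⟨a', rfl, h⟩)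
    · exact absurd ⟨a', h⟩ hP
    · have : a' = b := pow_fin_inj hω (mul_right_cancel₀ hC (h.symm.trans hb))
      subst this; rfl
    · exact absurd ⟨a', h⟩ hR
  · rintro rfl; exact Or.inr (Or.inl ⟨b, rfl, hb⟩)

theorem sset_singleR {A B C : ℂ} {c : Fin 3} (hC : C ≠ 0) (hc : B = ω ^ (c : ℕ) * C)
    (hP : ¬∃ a : Fin 3, A = ω ^ (a : ℕ) * B) (hQ : ¬∃ b : Fin 3, A = ω ^ (b : ℕ) * C) :
    sset ω A B C = {Rr ω c} := by
  ext x
  rw [mem_sset]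
  constructor
  · rintro (⟨a', rfl, h⟩ | ⟨a', rfl, h⟩ | ⟨a', rfl, h⟩)
    · exact absurd ⟨a', h⟩ hP
    · exact absurd ⟨a', h⟩ hQ
    · have : a' = c := pow_fin_inj hω (mul_right_cancel₀ hC (h.symm.trans hc))
      subst this; rfl
  · rintro rfl; exact Or.inr (Or.inr ⟨c, rfl, hc⟩)

omit hω in
theorem sset_empty {A B C : ℂ}
    (hP : ¬∃ a : Fin 3, A = ω ^ (a : ℕ) * B) (hQ : ¬∃ b : Fin 3, A = ω ^ (b : ℕ) * C)
    (hR : ¬∃ c : Fin 3, B = ω ^ (c : ℕ) * C) :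
    sset ω A B C = ∅ := by
  ext x
  rw [mem_sset]
  simp only [Set.mem_empty_iff_false, iff_false]
  rintro (⟨a', _, h⟩ | ⟨a', _, h⟩ | ⟨a', _, h⟩)
  · exact hP ⟨a', h⟩
  · exact hQ ⟨a', h⟩
  · exact hR ⟨a', h⟩

/-! ### The twelve triples and lines -/

def tri (ω : ℂ) : Fin 3 ⊕ Fin 3 × Fin 3 → Set P2 :=
  Sum.elim
    (fun k => ![({Pp ω 0, Pp ω 1, Pp ω 2} : Set P2),
      {Qq ω 0, Qq ω 1, Qq ω 2}, {Rr ω 0, Rr ω 1, Rr ω 2}] k)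
    (fun ab => {Pp ω ab.1, Qq ω ab.2, Rr ω (ab.2 - ab.1)})

def lcoef (ω : ℂ) : Fin 3 ⊕ Fin 3 × Fin 3 → ℂ × ℂ × ℂ :=
  Sum.elim (fun k => ![((0 : ℂ), (0 : ℂ), (1 : ℂ)), (0, 1, 0), (1, 0, 0)] k)
    (fun ab => (ω ^ (ab.1 : ℕ) * ω ^ (ab.2 : ℕ), ω ^ (ab.2 : ℕ), ω ^ (ab.1 : ℕ)))

def lset (ω : ℂ) (i : Fin 3 ⊕ Fin 3 × Fin 3) : Set P2 :=
  {p : P2 | lf (lcoef ω i).1 (lcoef ω i).2.1 (lcoef ω i).2.2 p.rep = 0}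

theorem lcoef_ne (i : Fin 3 ⊕ Fin 3 × Fin 3) :
    ¬((lcoef ω i).1 = 0 ∧ (lcoef ω i).2.1 = 0 ∧ (lcoef ω i).2.2 = 0) := by
  rintro ⟨h1, h2, h3⟩
  rcases i with k | ab
  · fin_cases k <;> simp_all [lcoef]
  · exact pow_ne hω ab.1 (by simpa [lcoef] using h3)

theorem F3_inter_lset (i : Fin 3 ⊕ Fin 3 × Fin 3) :
    F3 ω ∩ lset ω i = tri ω i := by
  rcases i with k | ab
  · fin_cases k
    · show sset ω 0 0 1 = _
      rw [sset_T1 hω rfl rfl one_ne_zero]; simp [tri]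
    · show sset ω 0 1 0 = _
      rw [sset_T2 hω rfl rfl one_ne_zero]; simp [tri]
    · show sset ω 1 0 0 = _
      rw [sset_T3 rfl rfl one_ne_zero]; simp [tri]
  · obtain ⟨a, b⟩ := ab
    show sset ω (ω ^ (a : ℕ) * ω ^ (b : ℕ)) (ω ^ (b : ℕ)) (ω ^ (a : ℕ)) = _
    rw [sset_tri hω (a := a) (b := b) (pow_ne hω b) (pow_ne hω a) (by ring) (by ring)]
    simp [tri]

theorem mem_tri_P {a : Fin 3} {j : Fin 3 ⊕ Fin 3 × Fin 3} (hm : Pp ω a ∈ tri ω j) :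
    j = Sum.inl 0 ∨ ∃ ab : Fin 3 × Fin 3, j = Sum.inr ab ∧ ab.1 = a := by
  rcases j with k | ab
  · fin_cases k
    · exact Or.inl rfl
    · simp [tri] at hm
      rcases hm with h' | h' | h' <;> exact absurd h' (Pp_ne_Qq hω _ _)
    · simp [tri] at hm
      rcases hm with h' | h' | h' <;> exact absurd h' (Pp_ne_Rr _ _)
  · simp [tri] at hm
    rcases hm with h' | h' | h'
    · exact Or.inr ⟨ab, rfl, (Pp_inj hω h').symm⟩
    · exact absurd h' (Pp_ne_Qq hω _ _)
    · exact absurd h' (Pp_ne_Rr _ _)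

theorem mem_tri_Q {b : Fin 3} {j : Fin 3 ⊕ Fin 3 × Fin 3} (hm : Qq ω b ∈ tri ω j) :
    j = Sum.inl 1 ∨ ∃ ab : Fin 3 × Fin 3, j = Sum.inr ab ∧ ab.2 = b := by
  rcases j with k | ab
  · fin_cases k
    · simp [tri] at hm
      rcases hm with h' | h' | h' <;> exact absurd h'.symm (Pp_ne_Qq hω _ _)
    · exact Or.inl rfl
    · simp [tri] at hm
      rcases hm with h' | h' | h' <;> exact absurd h' (Qq_ne_Rr _ _)
  · simp [tri] at hm
    rcases hm with h' | h' | h'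
    · exact absurd h'.symm (Pp_ne_Qq hω _ _)
    · exact Or.inr ⟨ab, rfl, (Qq_inj hω h').symm⟩
    · exact absurd h' (Qq_ne_Rr _ _)

theorem mem_tri_R {c : Fin 3} {j : Fin 3 ⊕ Fin 3 × Fin 3} (hm : Rr ω c ∈ tri ω j) :
    j = Sum.inl 2 ∨ ∃ ab : Fin 3 × Fin 3, j = Sum.inr ab ∧ ab.2 - ab.1 = c := by
  rcases j with k | ab
  · fin_cases k
    · simp [tri] at hm
      rcases hm with h' | h' | h' <;> exact absurd h'.symm (Pp_ne_Rr _ _)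
    · simp [tri] at hm
      rcases hm with h' | h' | h' <;> exact absurd h'.symm (Qq_ne_Rr _ _)
    · exact Or.inl rfl
  · simp [tri] at hm
    rcases hm with h' | h' | h'
    · exact absurd h'.symm (Pp_ne_Rr _ _)
    · exact absurd h'.symm (Qq_ne_Rr _ _)
    · exact Or.inr ⟨ab, rfl, (Rr_inj hω h').symm⟩

theorem tri_inj {i j : Fin 3 ⊕ Fin 3 × Fin 3} (h : tri ω i = tri ω j) : i = j := by
  rcases i with k | ab
  · fin_cases k
    · have h0 : Pp ω 0 ∈ tri ω j := by rw [← h]; simp [tri]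
      have h1 : Pp ω 1 ∈ tri ω j := by rw [← h]; simp [tri]
      rcases mem_tri_P hω h0 with rfl | ⟨ab, rfl, hab0⟩
      · rfl
      · rcases mem_tri_P hω h1 with h' | ⟨ab', hab', hab1⟩
        · exact absurd h' (by simp)
        · obtain rfl := Sum.inr.inj hab'
          rw [hab0] at hab1; exact absurd hab1 (by decide)
    · have h0 : Qq ω 0 ∈ tri ω j := by rw [← h]; simp [tri]
      have h1 : Qq ω 1 ∈ tri ω j := by rw [← h]; simp [tri]
      rcases mem_tri_Q hω h0 with rfl | ⟨ab, rfl, hab0⟩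
      · rfl
      · rcases mem_tri_Q hω h1 with h' | ⟨ab', hab', hab1⟩
        · exact absurd h' (by simp)
        · obtain rfl := Sum.inr.inj hab'
          rw [hab0] at hab1; exact absurd hab1 (by decide)
    · have h0 : Rr ω 0 ∈ tri ω j := by rw [← h]; simp [tri]
      have h1 : Rr ω 1 ∈ tri ω j := by rw [← h]; simp [tri]
      rcases mem_tri_R hω h0 with rfl | ⟨ab, rfl, hab0⟩
      · rfl
      · rcases mem_tri_R hω h1 with h' | ⟨ab', hab', hab1⟩
        · exact absurd h' (by simp)
        · obtain rfl := Sum.inr.inj hab'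
          rw [hab0] at hab1; exact absurd hab1 (by simp)
  · obtain ⟨a, b⟩ := ab
    have hP : Pp ω a ∈ tri ω j := by rw [← h]; simp [tri]
    have hQ : Qq ω b ∈ tri ω j := by rw [← h]; simp [tri]
    rcases mem_tri_P hω hP with rfl | ⟨ab', rfl, hab1⟩
    · rcases mem_tri_Q hω hQ with h' | ⟨ab', h', _⟩
      · exact absurd h' (by simp)
      · exact absurd h' (by simp)
    · rcases mem_tri_Q hω hQ with h' | ⟨ab'', h'', hab2⟩
      · exact absurd h' (by simp)
      · obtain rfl := Sum.inr.inj h''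
        obtain ⟨a', b'⟩ := ab'
        simp only at hab1 hab2
        rw [hab1, hab2]


/-! ### Classification and counting -/

theorem classify {A B C : ℂ} (hne : ¬(A = 0 ∧ B = 0 ∧ C = 0)) :
    sset ω A B C = ∅ ∨ (∃ x, sset ω A B C = {x}) ∨ ∃ i, sset ω A B C = tri ω i := by
  by_cases hEP : ∃ a : Fin 3, A = ω ^ (a : ℕ) * B
  · obtain ⟨a, ha⟩ := hEP
    by_cases hEQ : ∃ b : Fin 3, A = ω ^ (b : ℕ) * C
    · obtain ⟨b, hb⟩ := hEQ
      by_cases hB : B = 0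
      · have hA : A = 0 := by rw [ha, hB, mul_zero]
        have hC : C = 0 := by
          have := hb.symm.trans hA
          exact (mul_eq_zero.mp this).resolve_left (pow_ne hω b)
        exact absurd ⟨hA, hB, hC⟩ hne
      · by_cases hC : C = 0
        · have hA : A = 0 := by rw [hb, hC, mul_zero]
          have : B = 0 := (mul_eq_zero.mp (ha.symm.trans hA)).resolve_left (pow_ne hω a)
          exact absurd this hB
        · exact Or.inr (Or.inr ⟨Sum.inr (a, b),
            (sset_tri hω hB hC ha hb).trans (by simp [tri])⟩)
    · have hER : ¬∃ c : Fin 3, B = ω ^ (c : ℕ) * C := by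
        rintro ⟨c, hc⟩
        exact hEQ ⟨a + c, by rw [pow_fin_add hω, ha, hc]; ring⟩
      by_cases hB : B = 0
      · have hA : A = 0 := by rw [ha, hB, mul_zero]
        have hC : C ≠ 0 := fun hC => hne ⟨hA, hB, hC⟩
        exact Or.inr (Or.inr ⟨Sum.inl 0, (sset_T1 hω hA hB hC).trans (by simp [tri])⟩)
      · exact Or.inr (Or.inl ⟨_, sset_singleP hω hB ha hEQ hER⟩)
  · by_cases hEQ : ∃ b : Fin 3, A = ω ^ (b : ℕ) * C
    · obtain ⟨b, hb⟩ := hEQ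
      have hER : ¬∃ c : Fin 3, B = ω ^ (c : ℕ) * C := by
        rintro ⟨c, hc⟩
        apply hEP
        refine ⟨b + (0 - c), ?_⟩
        have h1 : C = ω ^ ((0 - c : Fin 3) : ℕ) * B := by
          rw [hc, ← mul_assoc, pow_fin_sub hω 0 c]
          simp
        rw [pow_fin_add hω, hb, h1]
        ring
      by_cases hC : C = 0
      · have hA : A = 0 := by rw [hb, hC, mul_zero]
        have hB : B ≠ 0 := fun hB => hne ⟨hA, hB, hC⟩
        exact Or.inr (Or.inr ⟨Sum.inl 1, (sset_T2 hω hA hC hB).trans (by simp [tri])⟩)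
      · exact Or.inr (Or.inl ⟨_, sset_singleQ hω hC hb hEP hER⟩)
    · by_cases hER : ∃ c : Fin 3, B = ω ^ (c : ℕ) * C
      · obtain ⟨c, hc⟩ := hER
        by_cases hC : C = 0
        · have hB : B = 0 := by rw [hc, hC, mul_zero]
          have hA : A ≠ 0 := fun hA => hne ⟨hA, hB, hC⟩
          exact Or.inr (Or.inr ⟨Sum.inl 2, (sset_T3 hB hC hA).trans (by simp [tri])⟩)
        · exact Or.inr (Or.inl ⟨_, sset_singleR hω hC hc hEP hEQ⟩)
      · exact Or.inl (sset_empty hEP hEQ hER)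

omit hω in
theorem ncard3 {x y z : P2} (h1 : x ≠ y) (h2 : x ≠ z) (h3 : y ≠ z) :
    ({x, y, z} : Set P2).ncard = 3 := by
  rw [Set.ncard_insert_of_notMem (by simp [h1, h2]), Set.ncard_pair h3]

theorem tri_ncard (i : Fin 3 ⊕ Fin 3 × Fin 3) : (tri ω i).ncard = 3 := by
  rcases i with k | ab
  · fin_cases k
    · show ({Pp ω 0, Pp ω 1, Pp ω 2} : Set P2).ncard = 3
      exact ncard3 (fun h => absurd (Pp_inj hω h) (by decide))
        (fun h => absurd (Pp_inj hω h) (by decide)) (fun h => absurd (Pp_inj hω h) (by decide))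
    · show ({Qq ω 0, Qq ω 1, Qq ω 2} : Set P2).ncard = 3
      exact ncard3 (fun h => absurd (Qq_inj hω h) (by decide))
        (fun h => absurd (Qq_inj hω h) (by decide)) (fun h => absurd (Qq_inj hω h) (by decide))
    · show ({Rr ω 0, Rr ω 1, Rr ω 2} : Set P2).ncard = 3
      exact ncard3 (fun h => absurd (Rr_inj hω h) (by decide))
        (fun h => absurd (Rr_inj hω h) (by decide)) (fun h => absurd (Rr_inj hω h) (by decide))
  · exact ncard3 (Pp_ne_Qq hω _ _) (Pp_ne_Rr _ _) (Qq_ne_Rr _ _)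

theorem tri_pair (i : Fin 3 ⊕ Fin 3 × Fin 3) :
    ∃ x y, x ≠ y ∧ x ∈ tri ω i ∧ y ∈ tri ω i := by
  rcases i with k | ab
  · fin_cases k
    · exact ⟨Pp ω 0, Pp ω 1, fun h => absurd (Pp_inj hω h) (by decide),
        by simp [tri], by simp [tri]⟩
    · exact ⟨Qq ω 0, Qq ω 1, fun h => absurd (Qq_inj hω h) (by decide),
        by simp [tri], by simp [tri]⟩
    · exact ⟨Rr ω 0, Rr ω 1, fun h => absurd (Rr_inj hω h) (by decide),
        by simp [tri], by simp [tri]⟩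
  · exact ⟨Pp ω ab.1, Qq ω ab.2, Pp_ne_Qq hω _ _, by simp [tri], by simp [tri]⟩

def ptsmap (ω : ℂ) : Fin 3 × Fin 3 → P2
  | (⟨0, _⟩, a) => Pp ω a
  | (⟨1, _⟩, a) => Qq ω a
  | (⟨2, _⟩, a) => Rr ω a

omit hω in
theorem F3_eq_range : F3 ω = Set.range (ptsmap ω) := by
  ext x
  rw [mem_F3_iff]
  constructor
  · rintro (⟨a, rfl⟩ | ⟨a, rfl⟩ | ⟨a, rfl⟩)
    exacts [⟨(0, a), rfl⟩, ⟨(1, a), rfl⟩, ⟨(2, a), rfl⟩]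
  · rintro ⟨⟨i, a⟩, rfl⟩
    fin_cases i
    exacts [Or.inl ⟨a, rfl⟩, Or.inr (Or.inl ⟨a, rfl⟩), Or.inr (Or.inr ⟨a, rfl⟩)]

theorem ptsmap_inj : Function.Injective (ptsmap ω) := by
  rintro ⟨i, a⟩ ⟨j, b⟩ h
  fin_cases i <;> fin_cases j <;>
    simp only [ptsmap] at h <;>
    simp only [Prod.mk.injEq] <;>
    first
      | exact ⟨trivial, Pp_inj hω h⟩
      | exact ⟨trivial, Qq_inj hω h⟩
      | exact ⟨trivial, Rr_inj hω h⟩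
      | exact ⟨rfl, Pp_inj hω h⟩
      | exact ⟨rfl, Qq_inj hω h⟩
      | exact ⟨rfl, Rr_inj hω h⟩
      | exact absurd h (Pp_ne_Qq hω _ _)
      | exact absurd h (Pp_ne_Rr _ _)
      | exact absurd h (Qq_ne_Rr _ _)
      | exact absurd h.symm (Pp_ne_Qq hω _ _)
      | exact absurd h.symm (Pp_ne_Rr _ _)
      | exact absurd h.symm (Qq_ne_Rr _ _)

theorem F3_ncard : (F3 ω).ncard = 9 := by
  rw [F3_eq_range, ← Set.image_univ, Set.ncard_image_of_injective _ (ptsmap_inj hω),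
    Set.ncard_univ]
  simp [Nat.card_eq_fintype_card]

theorem isLine_lset (i : Fin 3 ⊕ Fin 3 × Fin 3) : IsLine (lset ω i) :=
  ⟨_, lf_ne_zero (lcoef_ne hω i), rfl⟩

theorem lset_inj : Function.Injective (lset ω) := by
  intro i j h
  apply tri_inj hω
  rw [← F3_inter_lset hω i, ← F3_inter_lset hω j, h]

theorem rich_line (f : (Fin 3 → ℂ) →ₗ[ℂ] ℂ) (hf : f ≠ 0)
    (h2 : 2 ≤ (F3 ω ∩ {p : P2 | f p.rep = 0}).ncard) :
    ∃ i, F3 ω ∩ {p : P2 | f p.rep = 0} = tri ω i ∧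
      {p : P2 | f p.rep = 0} = lset ω i := by
  have hfe := lf_eq f
  set A := f (Pi.single 0 1) with hA
  set B := f (Pi.single 1 1) with hB
  set C := f (Pi.single 2 1) with hC
  have hne : ¬(A = 0 ∧ B = 0 ∧ C = 0) := by
    rintro ⟨h1', h2', h3'⟩
    apply hf
    rw [hfe, h1', h2', h3']
    apply LinearMap.ext
    intro v
    rw [lf_apply]
    simp
  have hss : F3 ω ∩ {p : P2 | f p.rep = 0} = sset ω A B C := by
    rw [hfe]
    rfl
  rcases classify hω hne with he | ⟨x, hx⟩ | ⟨i, hi⟩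
  · rw [hss, he] at h2; simp at h2
  · rw [hss, hx] at h2; simp at h2
  · refine ⟨i, hss.trans hi, ?_⟩
    obtain ⟨x, y, hxy, hx, hy⟩ := tri_pair hω i
    have hx1 : x ∈ sset ω A B C := by rw [hi]; exact hx
    have hy1 : y ∈ sset ω A B C := by rw [hi]; exact hy
    have hx2 : x ∈ F3 ω ∩ lset ω i := by rw [F3_inter_lset hω i]; exact hx
    have hy2 : y ∈ F3 ω ∩ lset ω i := by rw [F3_inter_lset hω i]; exact hy
    have hxf : f x.rep = 0 := by rw [hfe]; exact hx1.2
    have hyf : f y.rep = 0 := by rw [hfe]; exact hy1.2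
    exact line_unique hf (lf_ne_zero (lcoef_ne hω i)) hxy hxf hyf hx2.2 hy2.2

theorem lines_eq_range :
    {S : Set P2 | IsLine S ∧ (F3 ω ∩ S).ncard = 3} = Set.range (lset ω) := by
  ext S
  simp only [Set.mem_setOf_eq, Set.mem_range]
  constructor
  · rintro ⟨⟨f, hf, rfl⟩, h3⟩
    obtain ⟨i, _, hSi⟩ := rich_line hω f hf (by rw [h3]; norm_num)
    exact ⟨i, hSi.symm⟩
  · rintro ⟨i, rfl⟩
    exact ⟨isLine_lset hω i, by rw [F3_inter_lset hω i, tri_ncard hω i]⟩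

theorem lines_ncard :
    {S : Set P2 | IsLine S ∧ (F3 ω ∩ S).ncard = 3}.ncard = 12 := by
  rw [lines_eq_range hω, ← Set.image_univ, Set.ncard_image_of_injective _ (lset_inj hω),
    Set.ncard_univ]
  simp [Nat.card_eq_fintype_card]

theorem two_le_imp (S : Set P2) (hS : IsLine S) (h2 : 2 ≤ (F3 ω ∩ S).ncard) :
    (F3 ω ∩ S).ncard = 3 := by
  obtain ⟨f, hf, rfl⟩ := hS
  obtain ⟨i, hi, -⟩ := rich_line hω f hf h2
  rw [hi, tri_ncard hω i]

end Root

end F3Aux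

/-- The dual Fermat configuration `F₃` consists of nine points; every line containing
at least two of its points contains exactly three of them; it has exactly twelve
3-rich lines, no simple lines, and no `k`-rich lines with `k ≥ 4`. -/
theorem stmt18 (ω : ℂ) (hω : IsPrimitiveRoot ω 3) :
    (F3 ω).ncard = 9 ∧
    (∀ S : Set P2, IsLine S → 2 ≤ (F3 ω ∩ S).ncard → (F3 ω ∩ S).ncard = 3) ∧
    {S : Set P2 | IsLine S ∧ (F3 ω ∩ S).ncard = 3}.ncard = 12 ∧
    (∀ S : Set P2, IsLine S → (F3 ω ∩ S).ncard ≠ 2) ∧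
    (∀ S : Set P2, IsLine S → ∀ k : ℕ, 4 ≤ k → (F3 ω ∩ S).ncard ≠ k) := by
  refine ⟨F3Aux.F3_ncard hω, F3Aux.two_le_imp hω, F3Aux.lines_ncard hω, ?_, ?_⟩
  · intro S hS h
    have h3 := F3Aux.two_le_imp hω S hS (by omega)
    omega
  · intro S hS k hk hkeq
    have h3 := F3Aux.two_le_imp hω S hS (by omega)
    omega
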